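/- Let ζ ∈ ℂ² be a nonzero Majorana spinor and X = (X₁,X₂) ∈ ℝ² satisfy (X₁σ₁ + X₂σ₂)·ζ = ζ. Then X coincides with the bilinear vector of ζ: X₁ = (ζ†σ₁ζ)/(ζ†ζ) and X₂ = (ζ†σ₂ζ)/(ζ†ζ); in particular X is a unit vector. -/

import Mathlib

open Matrix Complex

noncomputable section

/-- Pauli matrix σ₁. -/
def σ1 : Matrix (Fin 2) (Fin 2) ℂ := !![0, 1; 1, 0]
/-- Pauli matrix σ₂. -/
def σ2 : Matrix (Fin 2) (Fin 2) ℂ := !![0, -I; I, 0]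

/-- A spinor ζ ∈ ℂ² is Majorana if conj(ζ) = i σ₁ ζ componentwise. -/
def IsMajorana (ζ : Fin 2 → ℂ) : Prop := star ζ = (I • σ1).mulVec ζ

/-- Let ζ be a nonzero Majorana spinor and X ∈ ℝ² with (X₁σ₁ + X₂σ₂)ζ = ζ. Then X
coincides with the bilinear vector of ζ: X₁ = (ζ†σ₁ζ)/(ζ†ζ) and X₂ = (ζ†σ₂ζ)/(ζ†ζ);
in particular X is a unit vector. -/
theorem eigenvector_determines_bilinear (ζ : Fin 2 → ℂ) (hζ : ζ ≠ 0) (hM : IsMajorana ζ)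
    (X1 X2 : ℝ) (hX : ((X1 : ℂ) • σ1 + (X2 : ℂ) • σ2).mulVec ζ = ζ) :
    (X1 : ℂ) = (star ζ ⬝ᵥ σ1.mulVec ζ) / (star ζ ⬝ᵥ ζ) ∧
    (X2 : ℂ) = (star ζ ⬝ᵥ σ2.mulVec ζ) / (star ζ ⬝ᵥ ζ) ∧
    X1 ^ 2 + X2 ^ 2 = 1 := by
  set a := ζ 0 with ha'
  set b := ζ 1 with hb'
  have hM0 := congrFun hM 0
  have hM1 := congrFun hM 1
  have hX0 := congrFun hX 0
  have hX1 := congrFun hX 1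
  simp [σ1, σ2, mulVec, dotProduct, Fin.sum_univ_two, Matrix.smul_apply,
    Pi.star_apply] at hM0 hM1 hX0 hX1
  -- hM0 : conj a = I * b, hM1 : conj b = I * a
  -- hX0 : X1 * b + X2 * (-I) * b = a (roughly), hX1 : ...
  have ha : a ≠ 0 := by
    intro h
    apply hζ
    have h0 : ζ 0 = 0 := h
    have hb : ζ 1 = 0 := by
      have : (starRingEnd ℂ) (ζ 1) = 0 := by rw [hM1, h0]; ring
      simpa using this
    funext i
    fin_cases i <;> simp [h0, hb]
  have hb : b ≠ 0 := by
    intro h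
    apply ha
    have h1 : ζ 1 = 0 := h
    have : (starRingEnd ℂ) (ζ 0) = 0 := by rw [hM0, h1]; ring
    simpa using this
  have key : star ζ ⬝ᵥ ζ = 2 * I * a * b := by
    simp [dotProduct, Fin.sum_univ_two, Pi.star_apply, ← ha', ← hb', hM0, hM1]
    rw [show (starRingEnd ℂ) a = I * b from hM0, show (starRingEnd ℂ) b = I * a from hM1]
    ring
  have k1 : star ζ ⬝ᵥ σ1.mulVec ζ = I * (a * a + b * b) := by
    simp [σ1, dotProduct, mulVec, Fin.sum_univ_two, Pi.star_apply, ← ha', ← hb', hM0, hM1]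
    rw [show (starRingEnd ℂ) a = I * b from hM0, show (starRingEnd ℂ) b = I * a from hM1]
    ring
  have k2 : star ζ ⬝ᵥ σ2.mulVec ζ = b * b - a * a := by
    simp [σ2, dotProduct, mulVec, Fin.sum_univ_two, Pi.star_apply, ← ha', ← hb', hM0, hM1]
    rw [show (starRingEnd ℂ) a = I * b from hM0, show (starRingEnd ℂ) b = I * a from hM1]
    linear_combination (a ^ 2 - b ^ 2) * Complex.I_sq
  have hIab : (2 : ℂ) * I * a * b ≠ 0 := by
    simp [ha, hb, I_ne_zero]
  have e1 : (X1 : ℂ) * b - I * (X2 : ℂ) * b = a := by linear_combination hX0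
  have e2 : (X1 : ℂ) * a + I * (X2 : ℂ) * a = b := by linear_combination hX1
  have g1 : (X1 : ℂ) = (star ζ ⬝ᵥ σ1.mulVec ζ) / (star ζ ⬝ᵥ ζ) := by
    rw [key, k1, eq_div_iff hIab]
    linear_combination (I * b) * e2 + (I * a) * e1
  have g2 : (X2 : ℂ) = (star ζ ⬝ᵥ σ2.mulVec ζ) / (star ζ ⬝ᵥ ζ) := by
    rw [key, k2, eq_div_iff hIab]
    linear_combination b * e2 - a * e1
  refine ⟨g1, g2, ?_⟩
  have : ((X1 : ℂ) ^ 2 + (X2 : ℂ) ^ 2) * (a * b) = a * b := by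
    linear_combination ((X1 + I * X2) * a) * e1 + a * e2 + a * b * (X2:ℂ)^2 * Complex.I_sq
  have h2 : ((X1 : ℂ) ^ 2 + (X2 : ℂ) ^ 2) = 1 := by
    have := mul_right_cancel₀ (mul_ne_zero ha hb) (this.trans (one_mul (a * b)).symm)
    simpa using this
  exact_mod_cast h2
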